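/- (Infinitary Splitting Lemma) Let F be an infinitary propositional formula over σ and let P_1, P_2 be disjoint sets of atoms such that the partition {P_1, P_2} is infinitely separable on the dependency graph DG_{P_1 ∪ P_2}[F]. Then an interpretation I is a (P_1 ∪ P_2)-stable model of F if and only if it is both a P_1-stable model and a P_2-stable model of F. -/
import Mathlib


/-- Infinitary propositional formulas over signature `σ`:
atoms, conjunctions and disjunctions of (index-)sets of formulas, implication. -/
inductive Formula (σ : Type) : Type 1
  | atom : σ → Formula σ
  | conj : (ι : Type) → (ι → Formula σ) → Formula σ
  | disj : (ι : Type) → (ι → Formula σ) → Formula σ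
  | imp : Formula σ → Formula σ → Formula σ

namespace Formula

variable {σ : Type}

/-- `⊥` is the empty disjunction. -/
def bot : Formula σ := Formula.disj Empty (fun e => e.elim)

/-- Binary conjunction `F ∧ G`. -/
def and (F G : Formula σ) : Formula σ := Formula.conj Bool (fun b => if b then F else G)

/-- Binary disjunction `F ∨ G`. -/
def or (F G : Formula σ) : Formula σ := Formula.disj Bool (fun b => if b then F else G)

/-- Negation `¬F` abbreviates `F → ⊥`. -/
def neg (F : Formula σ) : Formula σ := Formula.imp F bot

/-- Conjunction of a set of atoms. -/
def conjAtoms (S : Set σ) : Formula σ := Formula.conj S (fun p => Formula.atom p.val)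

/-- Satisfaction of an infinitary formula by an interpretation `I ⊆ σ`. -/
def Sat (I : Set σ) : Formula σ → Prop
  | .atom p => p ∈ I
  | .conj _ f => ∀ i, Sat I (f i)
  | .disj _ f => ∃ i, Sat I (f i)
  | .imp F G => Sat I F → Sat I G

open Classical in
/-- The reduct `F^I`. -/
noncomputable def reduct (I : Set σ) : Formula σ → Formula σ
  | .atom p => if p ∈ I then Formula.atom p else bot
  | .conj ι f => Formula.conj ι (fun i => reduct I (f i))
  | .disj ι f => Formula.disj ι (fun i => reduct I (f i))
  | .imp F G => if Sat I (Formula.imp F G) then Formula.imp (reduct I F) (reduct I G) else bot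

/-- `I` is an `A`-stable model of `F`: `I` is minimal w.r.t. `≤_A`
(`J ≤_A I` iff `J ⊆ I` and `I \ J ⊆ A`) among interpretations satisfying `F^I`. -/
def AStable (A : Set σ) (I : Set σ) (F : Formula σ) : Prop :=
  Sat I (reduct I F) ∧ ∀ J : Set σ, J ⊆ I → I \ J ⊆ A → Sat J (reduct I F) → J = I

/-- A stable model is a `σ`-stable model. -/
def Stable (I : Set σ) (F : Formula σ) : Prop := AStable Set.univ I F

/-- The strictly positive atoms `P(F)`. -/
def spos : Formula σ → Set σ
  | .atom p => {p}
  | .conj _ f => ⋃ i, spos (f i)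
  | .disj _ f => ⋃ i, spos (f i)
  | .imp _ H => spos H

/-- `F` is (syntactically) the formula `⊥`, i.e. an empty disjunction. -/
def IsBot : Formula σ → Prop
  | .disj ι _ => IsEmpty ι
  | _ => False

open Classical in
mutual
/-- Positive nonnegated atoms `Pnn(F)`. -/
noncomputable def pnn : Formula σ → Set σ
  | .atom p => {p}
  | .conj _ f => ⋃ i, pnn (f i)
  | .disj _ f => ⋃ i, pnn (f i)
  | .imp G H => if IsBot H then ∅ else nnn G ∪ pnn H

/-- Negative nonnegated atoms `Nnn(F)`. -/
noncomputable def nnn : Formula σ → Set σ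
  | .atom _ => ∅
  | .conj _ f => ⋃ i, nnn (f i)
  | .disj _ f => ⋃ i, nnn (f i)
  | .imp G H => if IsBot H then ∅ else pnn G ∪ nnn H
end

/-- The rules of a formula, as antecedent/consequent pairs. -/
def rules : Formula σ → Set (Formula σ × Formula σ)
  | .atom _ => ∅
  | .conj _ f => ⋃ i, rules (f i)
  | .disj _ f => ⋃ i, rules (f i)
  | .imp G H => insert (G, H) (rules H)

/-- Edge relation of the positive dependency graph `DG_A[F]` (vertex set `A`). -/
noncomputable def DGEdge (F : Formula σ) (A : Set σ) (p q : σ) : Prop :=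
  p ∈ A ∧ q ∈ A ∧ ∃ R ∈ rules F, p ∈ spos R.2 ∧ q ∈ pnn R.1

/-- The atoms occurring in a formula. -/
def atoms : Formula σ → Set σ
  | .atom p => {p}
  | .conj _ f => ⋃ i, atoms (f i)
  | .disj _ f => ⋃ i, atoms (f i)
  | .imp G H => atoms G ∪ atoms H

/-- `G` is a definition for the set `Q` of atoms: a conjunction of formulas
`H ∧ C^∧ → q` with `q ∈ Q`, `C ⊆ Q`, and no atom of `Q` occurring in `H`. -/
def IsDefinition (Q : Set σ) (G : Formula σ) : Prop :=
  ∃ (ι : Type) (g : ι → Formula σ), G = Formula.conj ι g ∧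
    ∀ i, ∃ (H : Formula σ) (C : Set σ) (q : σ),
      q ∈ Q ∧ C ⊆ Q ∧ (∀ p ∈ Q, p ∉ atoms H) ∧
      g i = Formula.imp (Formula.and H (conjAtoms C)) (Formula.atom q)

end Formula

section Graph

variable {V : Type*}

/-- An infinite walk in the directed graph with edge relation `E`. -/
def IsInfWalk (E : V → V → Prop) (w : ℕ → V) : Prop := ∀ i, E (w i) (w (i + 1))

/-- The partition `{P₁, P₂}` is infinitely separable: every infinite walk
visits `P₁` or `P₂` only finitely often. -/
def InfSeparable (E : V → V → Prop) (P1 P2 : Set V) : Prop :=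
  ∀ w : ℕ → V, IsInfWalk E w → {i | w i ∈ P1}.Finite ∨ {i | w i ∈ P2}.Finite

/-- `u` and `v` are in the same strongly connected component:
each is reachable from the other. -/
def SameSCC (E : V → V → Prop) (u v : V) : Prop :=
  Relation.ReflTransGen E u v ∧ Relation.ReflTransGen E v u

/-- The partition `{P₁, P₂}` is separable: every strongly connected
component is contained in `P₁` or in `P₂`. -/
def Separable (E : V → V → Prop) (P1 P2 : Set V) : Prop :=
  ∀ u v, SameSCC E u v → ((u ∈ P1 ∧ v ∈ P1) ∨ (u ∈ P2 ∧ v ∈ P2))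

end Graph
section Aux
open Formula
variable {σ : Type}

lemma sat_bot (X : Set σ) : ¬ Sat X (bot (σ := σ)) := by
  rintro ⟨i, _⟩; exact i.elim

lemma sat_of_sat_reduct : ∀ {F : Formula σ} {I J : Set σ}, Sat J (reduct I F) → Sat I F := by
  intro F
  induction F with
  | atom p => intro I J h
              simp only [reduct] at h
              split at h
              · exact ‹p ∈ I›
              · exact absurd h (sat_bot J)
  | conj ι f ih => intro I J h i; exact ih i (h i)
  | disj ι f ih => intro I J h; obtain ⟨i, hi⟩ := h; exact ⟨i, ih i hi⟩
  | imp G H ihG ihH =>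
      intro I J h
      simp only [reduct] at h
      split at h
      · assumption
      · exact absurd h (sat_bot J)

lemma sat_reduct_self : ∀ {F : Formula σ} {I : Set σ}, Sat I F → Sat I (reduct I F) := by
  intro F
  induction F with
  | atom p => intro I h
              have hp : p ∈ I := h
              simp only [reduct, if_pos hp]; exact hp
  | conj ι f ih => intro I h i; exact ih i (h i)
  | disj ι f ih => intro I h; obtain ⟨i, hi⟩ := h; exact ⟨i, ih i hi⟩
  | imp G H ihG ihH =>
      intro I h
      simp only [reduct, if_pos h]
      intro hG
      exact ihH (h (sat_of_sat_reduct hG))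

lemma isBot_not_sat {X : Set σ} : ∀ {H : Formula σ}, H.IsBot → ¬ Sat X H := by
  intro H hb
  cases H with
  | atom p => exact False.elim hb
  | conj ι f => exact False.elim hb
  | imp G H => exact False.elim hb
  | disj ι f =>
      have : IsEmpty ι := hb
      rintro ⟨i, _⟩; exact this.elim i

lemma isBot_not_sat_reduct {X I : Set σ} : ∀ {H : Formula σ}, H.IsBot → ¬ Sat X (reduct I H) := by
  intro H hb
  cases H with
  | atom p => exact False.elim hb
  | conj ι f => exact False.elim hb
  | imp G H => exact False.elim hb
  | disj ι f =>
      have : IsEmpty ι := hb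
      rintro ⟨i, _⟩; exact this.elim i

end Aux
section Aux2
open Formula
variable {σ : Type}

lemma lemS {U : Set σ} : ∀ {F : Formula σ} {I : Set σ}, Sat I F → (∀ p ∈ spos F, p ∉ U) →
    Sat (I \ U) (reduct I F) := by
  intro F
  induction F with
  | atom p =>
      intro I h hU
      have hp : p ∈ I := h
      simp only [reduct, if_pos hp]
      exact ⟨hp, hU p rfl⟩
  | conj ι f ih =>
      intro I h hU i
      exact ih i (h i) (fun p hp => hU p (Set.mem_iUnion.2 ⟨i, hp⟩))
  | disj ι f ih =>
      intro I h hU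
      obtain ⟨i, hi⟩ := h
      exact ⟨i, ih i hi (fun p hp => hU p (Set.mem_iUnion.2 ⟨i, hp⟩))⟩
  | imp G H ihG ihH =>
      intro I h hU
      simp only [reduct, if_pos h]
      intro hG
      exact ihH (h (sat_of_sat_reduct hG)) hU

lemma lemM {I J K : Set σ} (hJK : J ⊆ K) : ∀ (G : Formula σ),
    ((∀ p ∈ pnn G, p ∈ K → p ∈ J) → Sat K (reduct I G) → Sat J (reduct I G)) ∧
    ((∀ p ∈ nnn G, p ∈ K → p ∈ J) → Sat J (reduct I G) → Sat K (reduct I G)) := by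
  intro G
  induction G with
  | atom p =>
      constructor
      · intro hp h
        simp only [reduct] at h ⊢
        by_cases hpI : p ∈ I
        · rw [if_pos hpI] at h ⊢; exact hp p rfl h
        · rw [if_neg hpI] at h; exact absurd h (sat_bot K)
      · intro _ h
        simp only [reduct] at h ⊢
        by_cases hpI : p ∈ I
        · rw [if_pos hpI] at h ⊢; exact hJK h
        · rw [if_neg hpI] at h; exact absurd h (sat_bot J)
  | conj ι f ih =>
      constructor
      · intro hp h i
        exact (ih i).1 (fun p hm => hp p (by simp only [pnn]; exact Set.mem_iUnion.2 ⟨i, hm⟩)) (h i)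
      · intro hn h i
        exact (ih i).2 (fun p hm => hn p (by simp only [nnn]; exact Set.mem_iUnion.2 ⟨i, hm⟩)) (h i)
  | disj ι f ih =>
      constructor
      · rintro hp ⟨i, hi⟩
        exact ⟨i, (ih i).1 (fun p hm => hp p (by simp only [pnn]; exact Set.mem_iUnion.2 ⟨i, hm⟩)) hi⟩
      · rintro hn ⟨i, hi⟩
        exact ⟨i, (ih i).2 (fun p hm => hn p (by simp only [nnn]; exact Set.mem_iUnion.2 ⟨i, hm⟩)) hi⟩
  | imp G H ihG ihH =>
      by_cases hI : Sat I (Formula.imp G H)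
      · by_cases hb : H.IsBot
        · -- negation case: reduct satisfaction trivial
          have hnG : ¬ Sat I G := fun hg => isBot_not_sat hb (hI hg)
          constructor
          · intro _ _
            simp only [reduct, if_pos hI]
            intro hg
            exact absurd (sat_of_sat_reduct hg) hnG
          · intro _ _
            simp only [reduct, if_pos hI]
            intro hg
            exact absurd (sat_of_sat_reduct hg) hnG
        · constructor
          · intro hp h
            simp only [reduct, if_pos hI] at h ⊢
            have hp' : ∀ p ∈ nnn G ∪ pnn H, p ∈ K → p ∈ J := by
              intro p hm
              exact hp p (by simp only [pnn, if_neg hb]; exact hm)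
            intro hg
            have hKg : Sat K (reduct I G) := ihG.2 (fun p hm => hp' p (Or.inl hm)) hg
            exact ihH.1 (fun p hm => hp' p (Or.inr hm)) (h hKg)
          · intro hn h
            simp only [reduct, if_pos hI] at h ⊢
            have hn' : ∀ p ∈ pnn G ∪ nnn H, p ∈ K → p ∈ J := by
              intro p hm
              exact hn p (by simp only [nnn, if_neg hb]; exact hm)
            intro hg
            have hJg : Sat J (reduct I G) := ihG.1 (fun p hm => hn' p (Or.inl hm)) hg
            exact ihH.2 (fun p hm => hn' p (Or.inr hm)) (h hJg)
      · constructor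
        · intro _ h
          simp only [reduct, if_neg hI] at h
          exact absurd h (sat_bot K)
        · intro _ h
          simp only [reduct, if_neg hI] at h
          exact absurd h (sat_bot J)

end Aux2
section Aux3
open Formula
variable {σ : Type}

lemma lemC {I J U : Set σ} (hJI : J ⊆ I) (hUIJ : U ⊆ I \ J) : ∀ (F : Formula σ),
    (∀ G H, (G, H) ∈ rules F → (∃ p ∈ spos H, p ∈ U) → ∀ q ∈ pnn G, q ∉ (I \ J) \ U) →
    Sat J (reduct I F) → Sat (I \ U) (reduct I F) := by
  intro F
  induction F with
  | atom p =>
      intro _ h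
      simp only [reduct] at h ⊢
      by_cases hpI : p ∈ I
      · rw [if_pos hpI] at h ⊢
        have hpJ : p ∈ J := h
        exact ⟨hpI, fun hpU => (hUIJ hpU).2 hpJ⟩
      · rw [if_neg hpI] at h; exact absurd h (sat_bot J)
  | conj ι f ih =>
      intro hr h i
      refine ih i (fun G H hGH => hr G H ?_) (h i)
      simp only [rules]; exact Set.mem_iUnion.2 ⟨i, hGH⟩
  | disj ι f ih =>
      rintro hr ⟨i, hi⟩
      refine ⟨i, ih i (fun G H hGH => hr G H ?_) hi⟩
      simp only [rules]; exact Set.mem_iUnion.2 ⟨i, hGH⟩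
  | imp G H ihG ihH =>
      intro hr h
      by_cases hI : Sat I (Formula.imp G H)
      · simp only [reduct, if_pos hI] at h ⊢
        intro hKg
        by_cases hU : ∃ p ∈ spos H, p ∈ U
        · -- use lemM to pull satisfaction of G back to J
          have hrule : (G, H) ∈ rules (Formula.imp G H) := by
            simp only [rules]; exact Set.mem_insert _ _
          have hcond := hr G H hrule hU
          have hJK : J ⊆ I \ U := fun p hp => ⟨hJI hp, fun hpU => (hUIJ hpU).2 hp⟩
          have hJg : Sat J (reduct I G) := by
            refine (lemM hJK G).1 ?_ hKg
            intro p hp hpK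
            by_contra hpJ
            exact hcond p hp ⟨⟨hpK.1, hpJ⟩, hpK.2⟩
          have hJh : Sat J (reduct I H) := h hJg
          refine ihH (fun G' H' hGH' => hr G' H' ?_) hJh
          simp only [rules]; exact Set.mem_insert_of_mem _ hGH'
        · -- spos H misses U : use lemS
          push_neg at hU
          have hIG : Sat I G := sat_of_sat_reduct hKg
          exact lemS (hI hIG) hU
      · simp only [reduct, if_neg hI] at h
        exact absurd h (sat_bot J)

end Aux3
section Aux4

lemma transGen_path {V : Type*} {E : V → V → Prop} {a b : V} (h : Relation.TransGen E a b) :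
    ∃ (n : ℕ) (f : ℕ → V), f 0 = a ∧ f (n + 1) = b ∧ ∀ i ≤ n, E (f i) (f (i + 1)) := by
  induction h with
  | @single b e =>
      refine ⟨0, fun i => if i = 0 then a else b, by simp, by simp, ?_⟩
      intro i hi
      interval_cases i
      simpa using e
  | @tail b c hab e ih =>
      obtain ⟨n, f, h0, hn, he⟩ := ih
      refine ⟨n + 1, fun i => if i ≤ n + 1 then f i else c, by simp [h0], by simp, ?_⟩
      intro i hi
      rcases Nat.lt_or_ge i (n + 1) with hlt | hge
      · have h1 : i ≤ n + 1 := le_of_lt hlt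
        have h2 : i + 1 ≤ n + 1 := hlt
        simp only [if_pos h1, if_pos h2]
        exact he i (Nat.lt_succ_iff.mp hlt)
      · have : i = n + 1 := le_antisymm hi hge
        subst this
        show E (if n + 1 ≤ n + 1 then f (n + 1) else c)
          (if n + 1 + 1 ≤ n + 1 then f (n + 1 + 1) else c)
        rw [if_pos (le_refl _), if_neg (by omega), hn]
        exact e

end Aux4
section Aux5

lemma graph_lemma {V : Type*} (E : V → V → Prop) (P1 P2 D : Set V)
    (hdisj : Disjoint P1 P2) (hsep : InfSeparable E P1 P2)
    (hD : D ⊆ P1 ∪ P2) (hne : D.Nonempty) :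
    ∃ U : Set V, U.Nonempty ∧ U ⊆ D ∧ (∀ p ∈ U, ∀ q ∈ D, E p q → q ∈ U) ∧
      (U ⊆ P1 ∨ U ⊆ P2) := by
  classical
  set E' : V → V → Prop := fun p q => p ∈ D ∧ q ∈ D ∧ E p q with hE'
  set R : V → Set V := fun v => {q | Relation.ReflTransGen E' v q ∧ q ∈ D} with hR
  by_cases hmono : ∃ v ∈ D, R v ⊆ P1 ∨ R v ⊆ P2
  · obtain ⟨v, hv, hc⟩ := hmono
    refine ⟨R v, ⟨v, Relation.ReflTransGen.refl, hv⟩, fun q hq => hq.2, ?_, hc⟩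
    intro p hp q hq e
    exact ⟨hp.1.tail ⟨hp.2, hq, e⟩, hq⟩
  · exfalso
    push_neg at hmono
    -- every vertex of D reaches (within D) a vertex of the opposite color
    have key : ∀ v : V, ∃ (t : V) (n : ℕ) (f : ℕ → V), v ∈ D →
        t ∈ D ∧ (v ∈ P1 → t ∈ P2) ∧ (v ∈ P2 → t ∈ P1) ∧
        f 0 = v ∧ f (n + 1) = t ∧ ∀ i ≤ n, E (f i) (f (i + 1)) := by
      intro v
      by_cases hv : v ∈ D
      · obtain ⟨hn1, hn2⟩ := hmono v hv
        obtain ⟨q1, hq1R, hq1⟩ := Set.not_subset.mp hn1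
        obtain ⟨q2, hq2R, hq2⟩ := Set.not_subset.mp hn2
        have hq1P2 : q1 ∈ P2 := (hD hq1R.2).resolve_left hq1
        have hq2P1 : q2 ∈ P1 := (hD hq2R.2).resolve_right hq2
        rcases hD hv with hvP | hvP
        · -- v ∈ P1, go to q1 ∈ P2
          have hne' : q1 ≠ v := fun h => Set.disjoint_left.mp hdisj hvP (h ▸ hq1P2)
          have htg : Relation.TransGen E' v q1 := by
            rcases hq1R.1.cases_head with h | ⟨c, hvc, hcq⟩
            · exact absurd h hne'.symm
            · exact Relation.TransGen.head' hvc hcq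
          obtain ⟨n, f, h0, hn, he⟩ := transGen_path htg
          exact ⟨q1, n, f, fun _ => ⟨hq1R.2,
            fun _ => hq1P2,
            fun h2 => absurd h2 (Set.disjoint_left.mp hdisj hvP),
            h0, hn, fun i hi => (he i hi).2.2⟩⟩
        · -- v ∈ P2, go to q2 ∈ P1
          have hne' : q2 ≠ v := fun h => Set.disjoint_left.mp hdisj hq2P1 (h ▸ hvP)
          have htg : Relation.TransGen E' v q2 := by
            rcases hq2R.1.cases_head with h | ⟨c, hvc, hcq⟩
            · exact absurd h hne'.symm
            · exact Relation.TransGen.head' hvc hcq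
          obtain ⟨n, f, h0, hn, he⟩ := transGen_path htg
          exact ⟨q2, n, f, fun _ => ⟨hq2R.2,
            fun h1 => absurd h1 (Set.disjoint_right.mp hdisj hvP),
            fun _ => hq2P1,
            h0, hn, fun i hi => (he i hi).2.2⟩⟩
      · exact ⟨v, 0, fun _ => v, fun h => absurd h hv⟩
    choose t len pf hspec using key
    obtain ⟨v0, hv0⟩ := hne
    set vs : ℕ → V := fun k => t^[k] v0 with hvs
    have hvs_succ : ∀ k, vs (k + 1) = t (vs k) := fun k =>
      Function.iterate_succ_apply' t k v0
    have hvsD : ∀ k, vs k ∈ D := by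
      intro k
      induction k with
      | zero => exact hv0
      | succ k ih => rw [hvs_succ]; exact (hspec (vs k) ih).1
    set N : ℕ → ℕ := fun k => ∑ i ∈ Finset.range k, (len (vs i) + 1) with hN
    have hN0 : N 0 = 0 := by simp [hN]
    have hNsucc : ∀ k, N (k + 1) = N k + (len (vs k) + 1) := fun k =>
      Finset.sum_range_succ _ k
    have hNmono : StrictMono N := strictMono_nat_of_lt_succ (fun k => by
      rw [hNsucc]; omega)
    have hNk : ∀ k, k ≤ N k := by
      intro k
      induction k with
      | zero => omega
      | succ k ih => rw [hNsucc]; omega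
    set idx : ℕ → ℕ := fun m => Nat.findGreatest (fun k => N k ≤ m) m with hidx
    have hidx_le : ∀ m, N (idx m) ≤ m := fun m =>
      Nat.findGreatest_spec (P := fun k => N k ≤ m) (Nat.zero_le m) (by omega)
    have hidx_lt : ∀ m, m < N (idx m + 1) := by
      intro m
      by_contra h
      push_neg at h
      have h1 : idx m + 1 ≤ m := le_trans (hNk _) h
      have h2 := Nat.le_findGreatest (P := fun k => N k ≤ m) h1 h
      have h2' : idx m + 1 ≤ idx m := h2
      omega
    have hidx_unique : ∀ k m, N k ≤ m → m < N (k + 1) → idx m = k := by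
      intro k m h1 h2
      have hk_le : k ≤ idx m := Nat.le_findGreatest (le_trans (hNk k) h1) h1
      by_contra hne'
      have h3 : k + 1 ≤ idx m := by omega
      have h4 : N (k + 1) ≤ N (idx m) := hNmono.monotone h3
      have h5 := hidx_le m
      omega
    set w : ℕ → V := fun m => pf (vs (idx m)) (m - N (idx m)) with hw
    have hwalk : IsInfWalk E w := by
      intro m
      obtain ⟨htD, hc1, hc2, h0, hlast, hedge⟩ := hspec (vs (idx m)) (hvsD (idx m))
      have h1 : N (idx m) ≤ m := hidx_le m
      have h2 : m < N (idx m + 1) := hidx_lt m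
      have hj : m - N (idx m) ≤ len (vs (idx m)) := by
        have := hNsucc (idx m); omega
      rcases eq_or_lt_of_le (show m + 1 ≤ N (idx m + 1) from h2) with heq | hlt
      · have hidx1 : idx (m + 1) = idx m + 1 :=
          hidx_unique _ _ (le_of_eq heq.symm) (by have := hNsucc (idx m + 1); omega)
        show E (pf (vs (idx m)) (m - N (idx m))) (pf (vs (idx (m + 1))) (m + 1 - N (idx (m + 1))))
        rw [hidx1]
        have hz : m + 1 - N (idx m + 1) = 0 := by omega
        rw [hz]
        have hstart : pf (vs (idx m + 1)) 0 = vs (idx m + 1) :=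
          (hspec (vs (idx m + 1)) (hvsD (idx m + 1))).2.2.2.1
        rw [hstart, hvs_succ (idx m), ← hlast]
        have hm : m - N (idx m) = len (vs (idx m)) := by
          have := hNsucc (idx m); omega
        rw [hm]
        exact hedge _ (le_refl _)
      · have hidx1 : idx (m + 1) = idx m := hidx_unique _ _ (by omega) hlt
        show E (pf (vs (idx m)) (m - N (idx m))) (pf (vs (idx (m + 1))) (m + 1 - N (idx (m + 1))))
        rw [hidx1]
        have hs : m + 1 - N (idx m) = (m - N (idx m)) + 1 := by omega
        rw [hs]
        exact hedge _ hj
    have hwN : ∀ k, w (N k) = vs k := by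
      intro k
      have hik : idx (N k) = k := hidx_unique k (N k) (le_refl _) (hNmono (Nat.lt_succ_self k))
      show pf (vs (idx (N k))) (N k - N (idx (N k))) = vs k
      rw [hik, Nat.sub_self]
      exact (hspec (vs k) (hvsD k)).2.2.2.1
    have hP1 : ∀ k, ∃ k' ≥ k, vs k' ∈ P1 := by
      intro k
      rcases hD (hvsD k) with h | h
      · exact ⟨k, le_refl k, h⟩
      · exact ⟨k + 1, by omega, by rw [hvs_succ]; exact (hspec (vs k) (hvsD k)).2.2.1 h⟩
    have hP2 : ∀ k, ∃ k' ≥ k, vs k' ∈ P2 := by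
      intro k
      rcases hD (hvsD k) with h | h
      · exact ⟨k + 1, by omega, by rw [hvs_succ]; exact (hspec (vs k) (hvsD k)).2.1 h⟩
      · exact ⟨k, le_refl k, h⟩
    have hunb : ∀ (P : Set V), (∀ k, ∃ k' ≥ k, vs k' ∈ P) → ¬ {i | w i ∈ P}.Finite := by
      intro P hP hfin
      obtain ⟨b, hb⟩ := hfin.bddAbove
      obtain ⟨k', hk', hmem⟩ := hP (b + 1)
      have hmemS : N k' ∈ {i | w i ∈ P} := by
        simp only [Set.mem_setOf_eq, hwN k']; exact hmem
      have := hb hmemS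
      have := hNk k'
      omega
    rcases hsep w hwalk with hfin | hfin
    · exact hunb P1 hP1 hfin
    · exact hunb P2 hP2 hfin

end Aux5
/-- Infinitary Splitting Lemma: if `{P₁, P₂}` is infinitely
separable on `DG_{P₁∪P₂}[F]`, then `I` is a `(P₁ ∪ P₂)`-stable model of `F`
iff it is both a `P₁`-stable and a `P₂`-stable model of `F`. -/
theorem infinitary_splitting_lemma {σ : Type} (F : Formula σ) (P1 P2 : Set σ)
    (hdisj : Disjoint P1 P2)
    (hsep : InfSeparable (Formula.DGEdge F (P1 ∪ P2)) P1 P2) (I : Set σ) :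
    Formula.AStable (P1 ∪ P2) I F ↔
      Formula.AStable P1 I F ∧ Formula.AStable P2 I F := by
  constructor
  · rintro ⟨hsat, hmin⟩
    exact ⟨⟨hsat, fun J hJ hd hs => hmin J hJ (hd.trans Set.subset_union_left) hs⟩,
           ⟨hsat, fun J hJ hd hs => hmin J hJ (hd.trans Set.subset_union_right) hs⟩⟩
  · rintro ⟨⟨hsat, hmin1⟩, ⟨-, hmin2⟩⟩
    refine ⟨hsat, ?_⟩
    intro J hJI hdiff hs
    by_contra hne
    have hDne : (I \ J).Nonempty := by
      rw [Set.diff_nonempty]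
      exact fun h => hne (Set.Subset.antisymm hJI h)
    obtain ⟨U, hUne, hUD, hUclosed, hUc⟩ :=
      graph_lemma (Formula.DGEdge F (P1 ∪ P2)) P1 P2 (I \ J) hdisj hsep hdiff hDne
    have hcond : ∀ G H, (G, H) ∈ Formula.rules F → (∃ p ∈ Formula.spos H, p ∈ U) →
        ∀ q ∈ Formula.pnn G, q ∉ (I \ J) \ U := by
      rintro G H hGH ⟨p, hpH, hpU⟩ q hq hqmem
      have hedge : Formula.DGEdge F (P1 ∪ P2) p q :=
        ⟨hdiff (hUD hpU), hdiff hqmem.1, ⟨(G, H), hGH, hpH, hq⟩⟩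
      exact hqmem.2 (hUclosed p hpU q hqmem.1 hedge)
    have hKsat := lemC hJI hUD F hcond hs
    have hKI : I \ U ⊆ I := Set.diff_subset
    have hUI : U ⊆ I := hUD.trans Set.diff_subset
    have hIK : I \ (I \ U) = U := Set.diff_diff_cancel_left hUI
    obtain ⟨u, hu⟩ := hUne
    rcases hUc with h1 | h1
    · have hEq : I \ U = I := hmin1 (I \ U) hKI (by rw [hIK]; exact h1) hKsat
      have : u ∈ I \ U := hEq.symm ▸ hUI hu
      exact this.2 hu
    · have hEq : I \ U = I := hmin2 (I \ U) hKI (by rw [hIK]; exact h1) hKsat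
      have : u ∈ I \ U := hEq.symm ▸ hUI hu
      exact this.2 hu
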